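/- Let H = ℂ² ⊗ ℂ² (two qubits), H_L = ℂ³ with orthonormal basis |0⟩, |1⟩, |2⟩, and let V : H_L → H be the isometry defined by V|0⟩ = |0⟩⊗|0⟩, V|1⟩ = |0⟩⊗|1⟩, V|2⟩ = |1⟩⊗|0⟩. Let A be the first qubit, so H_A = ℂ² and H_Ā = ℂ². Then: (i) the set V†(L(H_A) ⊗ I_Ā)V is not closed under operator multiplication (hence is not a von Neumann algebra); and (ii) there exists no von Neumann algebra N on H_L such that (V, A, N) satisfies complementary recovery. -/

import Mathlib

open Matrix Kronecker

/-- The commutant of a set of operators. -/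
def commutant {ι : Type*} [Fintype ι] (M : Set (Matrix ι ι ℂ)) : Set (Matrix ι ι ℂ) :=
  {B | ∀ A ∈ M, A * B = B * A}

/-- A von Neumann algebra on a finite-dimensional complex Hilbert space. -/
structure IsVNAlgebra {ι : Type*} [Fintype ι] [DecidableEq ι]
    (M : Set (Matrix ι ι ℂ)) : Prop where
  add_mem : ∀ A ∈ M, ∀ B ∈ M, A + B ∈ M
  mul_mem : ∀ A ∈ M, ∀ B ∈ M, A * B ∈ M
  smul_mem : ∀ (c : ℂ), ∀ A ∈ M, c • A ∈ M
  star_mem : ∀ A ∈ M, Aᴴ ∈ M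
  one_mem : (1 : Matrix ι ι ℂ) ∈ M

/-- The set `V†(L(H_A) ⊗ I_Ā)V` of logical operators correctable from `A`. -/
def correctableOps {ιA ιB ιL : Type*} [Fintype ιA] [Fintype ιB] [DecidableEq ιB]
    [Fintype ιL] (V : Matrix (ιA × ιB) ιL ℂ) : Set (Matrix ιL ιL ℂ) :=
  {O | ∃ OA : Matrix ιA ιA ℂ, O = Vᴴ * (OA ⊗ₖ (1 : Matrix ιB ιB ℂ)) * V}

/-- The set `V†(I_A ⊗ L(H_Ā))V` of logical operators correctable from `Ā`. -/
def correctableOpsBar {ιA ιB ιL : Type*} [Fintype ιA] [DecidableEq ιA] [Fintype ιB]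
    [Fintype ιL] (V : Matrix (ιA × ιB) ιL ℂ) : Set (Matrix ιL ιL ℂ) :=
  {O | ∃ OB : Matrix ιB ιB ℂ, O = Vᴴ * ((1 : Matrix ιA ιA ℂ) ⊗ₖ OB) * V}

/-- Complementary recovery for the triple `(V, A, M)`. -/
def ComplementaryRecovery {ιA ιB ιL : Type*}
    [Fintype ιA] [DecidableEq ιA] [Fintype ιB] [DecidableEq ιB] [Fintype ιL]
    (V : Matrix (ιA × ιB) ιL ℂ) (M : Set (Matrix ιL ιL ℂ)) : Prop :=
  M ⊆ correctableOps V ∧ commutant M ⊆ correctableOpsBar V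

/-- The qutrit-into-two-qubits isometry `V|0⟩ = |00⟩`, `V|1⟩ = |01⟩`, `V|2⟩ = |10⟩`. -/
def V13 : Matrix (Fin 2 × Fin 2) (Fin 3) ℂ :=
  Matrix.of fun q l =>
    if q = (0, 0) ∧ l = 0 then 1
    else if q = (0, 1) ∧ l = 1 then 1
    else if q = (1, 0) ∧ l = 2 then 1
    else 0


private lemma keyA13 (OA : Matrix (Fin 2) (Fin 2) ℂ) :
    V13ᴴ * (OA ⊗ₖ (1 : Matrix (Fin 2) (Fin 2) ℂ)) * V13 =
    !![OA 0 0, 0, OA 0 1; 0, OA 0 0, 0; OA 1 0, 0, OA 1 1] := by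
  ext i j
  fin_cases i <;> fin_cases j <;>
    simp [Matrix.mul_apply, Fintype.sum_prod_type, Fin.sum_univ_two, V13,
      Matrix.kroneckerMap_apply, Matrix.one_apply, Matrix.conjTranspose_apply]

private lemma keyB13 (OB : Matrix (Fin 2) (Fin 2) ℂ) :
    V13ᴴ * ((1 : Matrix (Fin 2) (Fin 2) ℂ) ⊗ₖ OB) * V13 =
    !![OB 0 0, OB 0 1, 0; OB 1 0, OB 1 1, 0; 0, 0, OB 0 0] := by
  ext i j
  fin_cases i <;> fin_cases j <;>
    simp [Matrix.mul_apply, Fintype.sum_prod_type, Fin.sum_univ_two, V13,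
      Matrix.kroneckerMap_apply, Matrix.one_apply, Matrix.conjTranspose_apply]

private lemma notClosed13 : ¬ ∀ X ∈ correctableOps V13, ∀ Y ∈ correctableOps V13,
    X * Y ∈ correctableOps V13 := by
  intro h
  have hX : V13ᴴ * ((!![0,1;0,0] : Matrix (Fin 2) (Fin 2) ℂ) ⊗ₖ (1 : Matrix (Fin 2) (Fin 2) ℂ)) * V13 ∈
      correctableOps V13 := ⟨_, rfl⟩
  have hY : V13ᴴ * ((!![0,0;1,0] : Matrix (Fin 2) (Fin 2) ℂ) ⊗ₖ (1 : Matrix (Fin 2) (Fin 2) ℂ)) * V13 ∈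
      correctableOps V13 := ⟨_, rfl⟩
  obtain ⟨OA, hOA⟩ := h _ hX _ hY
  simp only [keyA13] at hOA
  have h00 := congrArg (fun M => M 0 0) hOA
  have h11 := congrArg (fun M => M 1 1) hOA
  simp [Matrix.mul_apply, Fin.sum_univ_three] at h00 h11
  rw [← h11] at h00
  exact one_ne_zero h00

private lemma noCR13 : ¬ ∃ N : Set (Matrix (Fin 3) (Fin 3) ℂ),
    IsVNAlgebra N ∧ ComplementaryRecovery V13 N := by
  rintro ⟨N, hVN, hsubA, hsubB⟩
  have hdiag : ∀ X ∈ N, ∃ a d : ℂ, X = !![a, 0, 0; 0, a, 0; 0, 0, d] := by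
    intro X hX
    obtain ⟨OA, hOA⟩ := hsubA hX
    rw [keyA13] at hOA
    subst hOA
    obtain ⟨P, hP⟩ := hsubA (hVN.mul_mem _ hX _ (hVN.star_mem _ hX))
    rw [keyA13] at hP
    obtain ⟨Q, hQ⟩ := hsubA (hVN.mul_mem _ (hVN.star_mem _ hX) _ hX)
    rw [keyA13] at hQ
    have hb : OA 0 1 = 0 := by
      have h00 := congrArg (fun M => M 0 0) hP
      have h11 := congrArg (fun M => M 1 1) hP
      simp [Matrix.mul_apply, Fin.sum_univ_three, Matrix.conjTranspose_apply]
        at h00 h11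
      have h2 : OA 0 1 * (starRingEnd ℂ) (OA 0 1) = 0 := by
        rw [← h11] at h00; linear_combination h00
      rw [Complex.mul_conj] at h2
      exact Complex.normSq_eq_zero.mp (by exact_mod_cast h2)
    have hc : OA 1 0 = 0 := by
      have h00 := congrArg (fun M => M 0 0) hQ
      have h11 := congrArg (fun M => M 1 1) hQ
      simp [Matrix.mul_apply, Fin.sum_univ_three, Matrix.conjTranspose_apply]
        at h00 h11
      have h2 : OA 1 0 * (starRingEnd ℂ) (OA 1 0) = 0 := by
        rw [← h11] at h00; linear_combination h00
      rw [Complex.mul_conj] at h2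
      exact Complex.normSq_eq_zero.mp (by exact_mod_cast h2)
    exact ⟨OA 0 0, OA 1 1, by rw [hb, hc]⟩
  have hE : !![(1:ℂ), 0, 0; 0, 0, 0; 0, 0, 0] ∈ commutant N := by
    intro X hX
    obtain ⟨a, d, rfl⟩ := hdiag X hX
    rw [Matrix.mul_fin_three, Matrix.mul_fin_three]
    norm_num
  obtain ⟨OB, hOB⟩ := hsubB hE
  rw [keyB13] at hOB
  have h00 := congrArg (fun M => M 0 0) hOB
  have h22 := congrArg (fun M => M 2 2) hOB
  simp at h00 h22
  rw [← h22] at h00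
  exact one_ne_zero h00

/-- a code without complementary recovery: for the isometry `V13`
from a qutrit into two qubits, with `A` the first qubit: (i) the set
`V†(L(H_A) ⊗ I_Ā)V` is not closed under operator multiplication (hence is not a von
Neumann algebra); and (ii) there exists no von Neumann algebra `N` on the qutrit such
that `(V, A, N)` satisfies complementary recovery. -/
theorem no_complementary_recovery_example :
    (¬ ∀ X ∈ correctableOps V13, ∀ Y ∈ correctableOps V13,
        X * Y ∈ correctableOps V13) ∧
    (¬ IsVNAlgebra (correctableOps V13)) ∧
    (¬ ∃ N : Set (Matrix (Fin 3) (Fin 3) ℂ),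
        IsVNAlgebra N ∧ ComplementaryRecovery V13 N) := by
    refine ⟨notClosed13, fun h => notClosed13 h.mul_mem, noCR13⟩
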